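/- Let A, Q, D, P* be n×n real matrices such that P* is symmetric positive definite, D is positive semidefinite, Q is symmetric, and Aᵀ P* + P* A + Q − P* D P* = 0 (the algebraic Riccati equation). Set A_cl := A − D P*. Then for every symmetric n×n real matrix P̃ such that P* + P̃ is positive semidefinite, tr(P*⁻¹ P̃ P*⁻¹ (A_clᵀ P̃ + P̃ A_cl − P̃ D P̃)) ≤ − tr(P*⁻¹ P̃ P*⁻¹ Q P*⁻¹ P̃). -/

import Mathlib

open Matrix

private lemma aux_trace_nonneg {n : ℕ} {M : Matrix (Fin n) (Fin n) ℝ}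
    (hM : M.PosSemidef) : 0 ≤ M.trace := by
  rw [Matrix.trace]
  refine Finset.sum_nonneg fun i _ => ?_
  have h := hM.dotProduct_mulVec_nonneg (Pi.single i 1)
  simpa [dotProduct, Matrix.mulVec, Pi.single_apply, mul_ite,
    Finset.sum_ite_eq, Finset.sum_ite_eq'] using h

/-- Dissipation inequality for the shifted differential Riccati equation:
on the invariant set `{P̃ : P* + P̃ ⪰ 0}`,
`tr(P*⁻¹ P̃ P*⁻¹ (A_clᵀ P̃ + P̃ A_cl − P̃ D P̃)) ≤ − tr(P*⁻¹ P̃ P*⁻¹ Q P*⁻¹ P̃)`. -/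
theorem riccati_dissipation_inequality {n : ℕ}
    (A Q D Pstar : Matrix (Fin n) (Fin n) ℝ)
    (hPstar : Pstar.PosDef) (hD : D.PosSemidef) (hQ : Q.IsSymm)
    (hARE : Aᵀ * Pstar + Pstar * A + Q - Pstar * D * Pstar = 0)
    (Ptil : Matrix (Fin n) (Fin n) ℝ) (hPtil : Ptil.IsSymm)
    (hcone : (Pstar + Ptil).PosSemidef) :
    (Pstar⁻¹ * Ptil * Pstar⁻¹ *
        ((A - D * Pstar)ᵀ * Ptil + Ptil * (A - D * Pstar) - Ptil * D * Ptil)).trace ≤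
      -(Pstar⁻¹ * Ptil * Pstar⁻¹ * Q * Pstar⁻¹ * Ptil).trace := by
  have hdet : IsUnit Pstar.det := hPstar.det_pos.ne'.isUnit
  set S := Pstar⁻¹ with hSdef
  set Acl := A - D * Pstar with hAcldef
  have hPS : Pstar * S = 1 := Matrix.mul_nonsing_inv _ hdet
  have hSP : S * Pstar = 1 := Matrix.nonsing_inv_mul _ hdet
  have hPsymm : Pstarᵀ = Pstar := by
    rw [← Matrix.conjTranspose_eq_transpose_of_trivial]; exact hPstar.1
  have hDsymm : Dᵀ = D := by
    rw [← Matrix.conjTranspose_eq_transpose_of_trivial]; exact hD.1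
  have hSsymm : Sᵀ = S := by
    rw [hSdef, Matrix.transpose_nonsing_inv, hPsymm]
  -- ARE consequence for the closed loop
  have hAREs : Aᵀ * Pstar + Pstar * A = Pstar * D * Pstar - Q := by
    have h2 : Aᵀ * Pstar + Pstar * A - (Pstar * D * Pstar - Q) = 0 := by
      rw [show Aᵀ * Pstar + Pstar * A - (Pstar * D * Pstar - Q)
          = Aᵀ * Pstar + Pstar * A + Q - Pstar * D * Pstar from by noncomm_ring, hARE]
    exact sub_eq_zero.mp h2
  have hAclT : Aclᵀ = Aᵀ - Pstar * D := by
    rw [hAcldef, Matrix.transpose_sub, Matrix.transpose_mul, hPsymm, hDsymm]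
  have hK : Aclᵀ * Pstar + Pstar * Acl = -Q - Pstar * D * Pstar := by
    rw [hAclT, hAcldef]
    calc (Aᵀ - Pstar * D) * Pstar + Pstar * (A - D * Pstar)
        = (Aᵀ * Pstar + Pstar * A) - Pstar * D * Pstar - Pstar * D * Pstar := by noncomm_ring
      _ = -Q - Pstar * D * Pstar := by rw [hAREs]; noncomm_ring
  have hK2 : S * Aclᵀ + Acl * S = -(S * Q * S) - D := by
    have l : S * (Aclᵀ * Pstar + Pstar * Acl) * S = S * Aclᵀ + Acl * S := by
      calc S * (Aclᵀ * Pstar + Pstar * Acl) * S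
          = S * Aclᵀ * (Pstar * S) + (S * Pstar) * (Acl * S) := by noncomm_ring
        _ = S * Aclᵀ + Acl * S := by rw [hPS, hSP, mul_one, one_mul]
    have r : S * (-Q - Pstar * D * Pstar) * S = -(S * Q * S) - D := by
      calc S * (-Q - Pstar * D * Pstar) * S
          = -(S * Q * S) - (S * Pstar) * D * (Pstar * S) := by noncomm_ring
        _ = -(S * Q * S) - D := by rw [hSP, hPS, mul_one, one_mul]
    rw [← l, hK, r]
  -- trace rearrangements
  have t1 : (S * Ptil * S * (Aclᵀ * Ptil)).trace = (Ptil * S * Ptil * (S * Aclᵀ)).trace := by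
    rw [show S * Ptil * S * (Aclᵀ * Ptil) = (S * Ptil * S * Aclᵀ) * Ptil from by noncomm_ring,
      Matrix.trace_mul_comm,
      show Ptil * (S * Ptil * S * Aclᵀ) = Ptil * S * Ptil * (S * Aclᵀ) from by noncomm_ring]
  have t2 : (S * Ptil * S * (Ptil * Acl)).trace = (Ptil * S * Ptil * (Acl * S)).trace := by
    rw [show S * Ptil * S * (Ptil * Acl) = S * (Ptil * S * Ptil * Acl) from by noncomm_ring,
      Matrix.trace_mul_comm,
      show Ptil * S * Ptil * Acl * S = Ptil * S * Ptil * (Acl * S) from by noncomm_ring]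
  have t3 : (S * Ptil * S * (Ptil * D * Ptil)).trace
      = (Ptil * S * Ptil * (D * (Ptil * S))).trace := by
    rw [show S * Ptil * S * (Ptil * D * Ptil) = S * (Ptil * S * Ptil * D * Ptil) from by
        noncomm_ring,
      Matrix.trace_mul_comm,
      show Ptil * S * Ptil * D * Ptil * S = Ptil * S * Ptil * (D * (Ptil * S)) from by
        noncomm_ring]
  have t4 : (S * Ptil * S * Q * S * Ptil).trace = (Ptil * S * Ptil * (S * Q * S)).trace := by
    rw [Matrix.trace_mul_comm (S * Ptil * S * Q * S) Ptil,
      show Ptil * (S * Ptil * S * Q * S) = Ptil * S * Ptil * (S * Q * S) from by noncomm_ring]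
  have tlin : (Ptil * S * Ptil * (S * Aclᵀ)).trace + (Ptil * S * Ptil * (Acl * S)).trace
      = -(Ptil * S * Ptil * (S * Q * S)).trace - (Ptil * S * Ptil * D).trace := by
    rw [← Matrix.trace_add, ← mul_add, hK2,
      show Ptil * S * Ptil * (-(S * Q * S) - D)
        = -(Ptil * S * Ptil * (S * Q * S)) - Ptil * S * Ptil * D from by noncomm_ring,
      Matrix.trace_sub, Matrix.trace_neg]
  -- the quadratic/dissipative part
  set R := Pstar + Ptil with hRdef
  have tq : (Ptil * S * Ptil * D).trace + (Ptil * S * Ptil * (D * (Ptil * S))).trace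
      = (Ptil * S * Ptil * (D * (R * S))).trace := by
    rw [← Matrix.trace_add]
    congr 1
    rw [hRdef,
      show (Pstar + Ptil) * S = Pstar * S + Ptil * S from by noncomm_ring, hPS,
      show Ptil * S * Ptil * (D * (1 + Ptil * S))
        = Ptil * S * Ptil * D + Ptil * S * Ptil * (D * (Ptil * S)) from by noncomm_ring]
  -- positivity of the quadratic part
  open scoped MatrixOrder in set Rs := CFC.sqrt R with hRsdef
  have hRs2 : Rs * Rs = R := by
    open scoped MatrixOrder in exact CFC.sqrt_mul_sqrt_self R (Matrix.nonneg_iff_posSemidef.mpr hcone)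
  have hRsH : Rsᴴ = Rs := by
    open scoped MatrixOrder in exact (Matrix.nonneg_iff_posSemidef.mp (CFC.sqrt_nonneg R)).1
  have hSH : Sᴴ = S := by
    rw [Matrix.conjTranspose_eq_transpose_of_trivial, hSsymm]
  set K := Rs * S * Rs with hKdef
  set L := Rs * D * Rs with hLdef
  have hLpsd : L.PosSemidef := by
    have := hD.mul_mul_conjTranspose_same Rs
    rwa [hRsH] at this
  have hKH : Kᴴ = K := by
    rw [hKdef, Matrix.conjTranspose_mul, Matrix.conjTranspose_mul, hRsH, hSH]
    noncomm_ring
  have hMpsd : ((K - 1) * L * (K - 1)).PosSemidef := by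
    have := hLpsd.conjTranspose_mul_mul_same (K - 1)
    rwa [Matrix.conjTranspose_sub, hKH, Matrix.conjTranspose_one] at this
  have hMtr : ((K - 1) * L * (K - 1)).trace = (Ptil * S * Ptil * (D * (R * S))).trace := by
    have eK : (K - 1) * L * (K - 1) = K * L * K - K * L - L * K + L := by noncomm_ring
    have eKLK : (K * L * K).trace = (S * R * D * R * S * R).trace := by
      rw [show K * L * K = Rs * (S * R * D * R * S * Rs) from by
          rw [hKdef, hLdef, ← hRs2]; noncomm_ring,
        Matrix.trace_mul_comm,
        show S * R * D * R * S * Rs * Rs = S * R * D * R * S * R from by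
          rw [mul_assoc (S * R * D * R * S), hRs2]]
    have eKL : (K * L).trace = (S * R * D * R).trace := by
      rw [show K * L = Rs * (S * R * D * Rs) from by rw [hKdef, hLdef, ← hRs2]; noncomm_ring,
        Matrix.trace_mul_comm,
        show S * R * D * Rs * Rs = S * R * D * R from by rw [mul_assoc (S * R * D), hRs2]]
    have eLK : (L * K).trace = (S * R * D * R).trace := by
      rw [show L * K = Rs * (D * R * S * Rs) from by rw [hKdef, hLdef, ← hRs2]; noncomm_ring,
        Matrix.trace_mul_comm,
        show D * R * S * Rs * Rs = (D * R) * (S * R) from by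
          rw [mul_assoc (D * R * S), hRs2]; noncomm_ring,
        Matrix.trace_mul_comm (D * R) (S * R),
        show (S * R) * (D * R) = S * R * D * R from by noncomm_ring]
    have eL : L.trace = (D * R).trace := by
      rw [show L = Rs * (D * Rs) from by rw [hLdef]; noncomm_ring,
        Matrix.trace_mul_comm,
        show D * Rs * Rs = D * R from by rw [mul_assoc, hRs2]]
    -- left-hand expansion
    have hPt : Ptil = R - Pstar := by rw [hRdef]; noncomm_ring
    have eLHS : Ptil * S * Ptil * (D * (R * S))
        = R * S * R * (D * (R * S)) - R * (D * (R * S)) - R * (D * (R * S))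
          + Pstar * (D * (R * S)) := by
      rw [hPt]
      have h1 : (R - Pstar) * S * (R - Pstar) = R * S * R - R - R + Pstar := by
        calc (R - Pstar) * S * (R - Pstar)
            = R * S * R - R * (S * Pstar) - (Pstar * S) * R + (Pstar * S) * Pstar := by
              noncomm_ring
          _ = R * S * R - R - R + Pstar := by rw [hSP, hPS]; noncomm_ring
      rw [h1]; noncomm_ring
    have eA : (R * S * R * (D * (R * S))).trace = (S * R * D * R * S * R).trace := by
      rw [show R * S * R * (D * (R * S)) = R * (S * R * D * R * S) from by noncomm_ring,
        Matrix.trace_mul_comm]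
    have eB : (R * (D * (R * S))).trace = (S * R * D * R).trace := by
      rw [show R * (D * (R * S)) = (R * D * R) * S from by noncomm_ring,
        Matrix.trace_mul_comm,
        show S * (R * D * R) = S * R * D * R from by noncomm_ring]
    have eC : (Pstar * (D * (R * S))).trace = (D * R).trace := by
      rw [show Pstar * (D * (R * S)) = (Pstar * D * R) * S from by noncomm_ring,
        Matrix.trace_mul_comm,
        show S * (Pstar * D * R) = (S * Pstar) * (D * R) from by noncomm_ring,
        hSP, one_mul]
    rw [eK, Matrix.trace_add, Matrix.trace_sub, Matrix.trace_sub, eKLK, eKL, eLK, eL,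
      eLHS, Matrix.trace_add, Matrix.trace_sub, Matrix.trace_sub, eA, eB, eC]
  have hquad : 0 ≤ (Ptil * S * Ptil * (D * (R * S))).trace := by
    rw [← hMtr]; exact aux_trace_nonneg hMpsd
  -- assemble
  have expandGoal : (S * Ptil * S * (Aclᵀ * Ptil + Ptil * Acl - Ptil * D * Ptil)).trace
      = (S * Ptil * S * (Aclᵀ * Ptil)).trace + (S * Ptil * S * (Ptil * Acl)).trace
        - (S * Ptil * S * (Ptil * D * Ptil)).trace := by
    rw [show S * Ptil * S * (Aclᵀ * Ptil + Ptil * Acl - Ptil * D * Ptil)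
        = S * Ptil * S * (Aclᵀ * Ptil) + S * Ptil * S * (Ptil * Acl)
          - S * Ptil * S * (Ptil * D * Ptil) from by noncomm_ring,
      Matrix.trace_sub, Matrix.trace_add]
  rw [expandGoal, t1, t2, t3, t4]
  linarith [tlin, tq, hquad]
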